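/- arXiv:1808.05559 — 4 statements merged into one kernel-verified Lean document; each statement's English description precedes it below -/
import Mathlib

section
/- Let f : A → B be a homomorphism of commutative rings and S ⊆ A a multiplicative subset. Assume that for every s ∈ S, f induces isomorphisms ker(s· : A → A) → ker(f(s)· : B → B) and coker(s· : A → A) → coker(f(s)· : B → B) of the kernels and cokernels of multiplication by s on A and by f(s) on B. Then the commutative square with corners A, B, S⁻¹A, S⁻¹B (with horizontal maps induced by f and vertical maps the localization maps) is a pullback square of rings; equivalently, the sequence 0 → A → S⁻¹A ⊕ B → S⁻¹B, with first map a ↦ (a/1, f(a)) and second map (x, b) ↦ x − b/1, is exact. -/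
/-- If `f : A → B` is an analytic isomorphism along a multiplicative set `S`
(i.e. `f` induces isomorphisms on kernels and cokernels of multiplication by
each `s ∈ S`), then the square `A, S⁻¹A, B, S⁻¹B` is a pullback of rings:
the sequence `0 → A → S⁻¹A ⊕ B → S⁻¹B` is exact, where the first map is
`a ↦ (a/1, f a)` and the second is `(x, b) ↦ x − b/1`. -/
theorem analytic_isomorphism_pullback
    {A B : Type*} [CommRing A] [CommRing B] (f : A →+* B) (S : Submonoid A)
    (hker : ∀ s ∈ S, Set.BijOn f {a : A | s * a = 0} {b : B | f s * b = 0})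
    (hcoker : ∀ s : A, ∀ hs : s ∈ S,
      Function.Bijective (Ideal.quotientMap (Ideal.span {f s}) f
        (Ideal.span_le.2 (Set.singleton_subset_iff.2
          (Ideal.mem_comap.2 (Ideal.subset_span (Set.mem_singleton _))))))) :
    Function.Injective
      (fun a : A => (algebraMap A (Localization S) a, f a)) ∧
    ∀ (x : Localization S) (b : B),
      IsLocalization.map (Localization (Submonoid.map f S)) f
          (Submonoid.le_comap_map S) x
        = algebraMap B (Localization (Submonoid.map f S)) b ↔
      ∃ a : A, algebraMap A (Localization S) a = x ∧ f a = b := by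
  constructor
  · intro a₁ a₂ h
    rw [Prod.mk.injEq] at h
    obtain ⟨h1, h2⟩ := h
    have h0 : algebraMap A (Localization S) (a₁ - a₂) = 0 := by
      rw [map_sub, h1, sub_self]
    obtain ⟨⟨s, hs⟩, hsa⟩ := (IsLocalization.map_eq_zero_iff S _ _).1 h0
    have hmem1 : a₁ - a₂ ∈ {a : A | s * a = 0} := hsa
    have hmem2 : (0 : A) ∈ {a : A | s * a = 0} := by simp [Set.mem_setOf_eq]
    have : a₁ - a₂ = 0 := (hker s hs).injOn hmem1 hmem2
      (by rw [map_sub, h2, sub_self, map_zero])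
    exact sub_eq_zero.1 this
  · intro x b
    constructor
    · intro hx
      obtain ⟨⟨a₀, ⟨s, hs⟩⟩, rfl⟩ := IsLocalization.mk'_surjective S x
      rw [IsLocalization.map_mk'] at hx
      rw [IsLocalization.mk'_eq_iff_eq_mul] at hx
      have hx' : algebraMap B (Localization (Submonoid.map f S)) (f a₀)
          = algebraMap B (Localization (Submonoid.map f S)) (b * f s) := by
        rw [map_mul]; exact hx
      obtain ⟨⟨_, t, ht, rfl⟩, hc⟩ :=
        (IsLocalization.eq_iff_exists (Submonoid.map f S) _).1 hx'
      -- hc : f t * f a₀ = f t * (b * f s)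
      set u := t * s with hu_def
      clear_value u
      have hu : u ∈ S := hu_def ▸ S.mul_mem ht hs
      have hc' : f t * f a₀ = f t * (b * f s) := hc
      have key : f (t * a₀) = f u * b := by
        rw [hu_def, map_mul, map_mul, hc']; ring
      -- cokernel surjectivity for u : find c with f c ≡ b mod (f u)
      obtain ⟨c', hc2⟩ := (hcoker u hu).2 (Ideal.Quotient.mk _ b)
      obtain ⟨c, rfl⟩ := Ideal.Quotient.mk_surjective c'
      rw [Ideal.quotientMap_mk, Ideal.Quotient.eq] at hc2
      obtain ⟨b₁, hb₁⟩ := Ideal.mem_span_singleton'.1 hc2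
      -- hb₁ : b₁ * f u = f c - b
      have hcb : f c = b + b₁ * f u := by linear_combination -hb₁
      set d := u * c - t * a₀ with hd_def
      clear_value d
      have hfd : f d = f (u * u) * b₁ := by
        rw [hd_def, map_sub, map_mul, key, hcb, map_mul]; ring
      -- cokernel injectivity for u*u : d ∈ (u*u)
      have huu : u * u ∈ S := S.mul_mem hu hu
      have hdmem : d ∈ Ideal.span ({u * u} : Set A) := by
        have h1 : (Ideal.quotientMap (Ideal.span {f (u * u)}) f
            (Ideal.span_le.2 (Set.singleton_subset_iff.2
              (Ideal.mem_comap.2 (Ideal.subset_span (Set.mem_singleton _))))))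
            (Ideal.Quotient.mk _ d) = (Ideal.quotientMap (Ideal.span {f (u * u)}) f
            (Ideal.span_le.2 (Set.singleton_subset_iff.2
              (Ideal.mem_comap.2 (Ideal.subset_span (Set.mem_singleton _))))))
            (Ideal.Quotient.mk _ 0) := by
          rw [Ideal.quotientMap_mk, Ideal.quotientMap_mk, map_zero,
            Ideal.Quotient.eq, sub_zero]
          exact Ideal.mem_span_singleton'.2 ⟨b₁, by rw [mul_comm, hfd]⟩
        have h2 := (hcoker (u * u) huu).1 h1
        rwa [Ideal.Quotient.eq, sub_zero] at h2
      obtain ⟨a₂, ha₂⟩ := Ideal.mem_span_singleton'.1 hdmem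
      have ha₂' : a₂ * (u * u) = u * c - t * a₀ := ha₂.trans hd_def
      set a := c - u * a₂ with ha_def
      clear_value a
      have hua : u * a = t * a₀ := by rw [ha_def]; linear_combination -ha₂'
      set e := f a - b with he_def
      clear_value e
      have hue : f u * e = 0 := by
        have h1 : f u * f u * b₁ = f u * f u * f a₂ := by
          have h3 : f (u * u) * b₁ = f (u * u) * f a₂ := by
            rw [← hfd, ← ha₂, map_mul]; ring
          rw [map_mul] at h3; linear_combination h3
        rw [he_def, ha_def, map_sub, map_mul]
        linear_combination f u * hcb + h1
      obtain ⟨k, hk, hfk⟩ := (hker u hu).surjOn hue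
      refine ⟨a - k, ?_, ?_⟩
      · have hk0 : algebraMap A (Localization S) k = 0 :=
          (IsLocalization.map_eq_zero_iff S _ _).2 ⟨⟨u, hu⟩, hk⟩
        rw [map_sub, hk0, sub_zero]
        rw [eq_comm, IsLocalization.mk'_eq_iff_eq_mul]
        rw [show algebraMap A (Localization S) a *
              algebraMap A (Localization S) ((⟨s, hs⟩ : S) : A)
            = algebraMap A (Localization S) (a * s) by rw [map_mul]]
        refine (IsLocalization.eq_iff_exists S _).2 ⟨⟨t, ht⟩, ?_⟩
        show t * a₀ = t * (a * s)
        rw [hu_def] at hua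
        linear_combination -hua
      · rw [map_sub, hfk, he_def]; ring
    · rintro ⟨a, ha, rfl⟩
      rw [← ha, IsLocalization.map_eq]
end

section
/- Let A be a commutative noetherian ring, I ⊆ A an ideal, M a finitely generated A-module, and i ≥ 1. Then the pro-system {Tor_i^A(A/I^λ, M)}_{λ∈ℕ} is pro-zero: for every λ there exists μ ≥ λ such that the transition map Tor_i^A(A/I^μ, M) → Tor_i^A(A/I^λ, M) is the zero map. -/
set_option linter.unusedSectionVars false
set_option linter.unusedVariables false
set_option maxHeartbeats 1000000


open CategoryTheory

open MonoidalCategory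

open CategoryTheory

section KeyLemma

variable {A : Type} [CommRing A] [IsNoetherianRing A] (I : Ideal A)

/-- Artin–Rees consequence: elements whose image under `d` lies deep in the `I`-adic
filtration are, modulo `I^l`, in the kernel of `d`. -/
theorem tor_aux_key {P P' : Type} [AddCommGroup P] [Module A P]
    [AddCommGroup P'] [Module A P'] [Module.Finite A P']
    (d : P →ₗ[A] P') (l : ℕ) :
    ∃ m : ℕ, l ≤ m ∧ ∀ x : P, d x ∈ (I ^ m • ⊤ : Submodule A P') →
      x ∈ (LinearMap.ker d ⊔ I ^ l • ⊤ : Submodule A P) := by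
  obtain ⟨k, hk⟩ := Ideal.exists_pow_inf_eq_pow_smul I (LinearMap.range d)
  refine ⟨l + k, Nat.le_add_right _ _, fun x hx => ?_⟩
  have h1 : d x ∈ (I ^ (l + k) • ⊤ ⊓ LinearMap.range d : Submodule A P') :=
    ⟨hx, ⟨x, rfl⟩⟩
  rw [hk (l + k) (Nat.le_add_left _ _)] at h1
  have h2 : d x ∈ (I ^ l • LinearMap.range d : Submodule A P') := by
    have : l + k - k = l := by omega
    rw [this] at h1
    exact Submodule.smul_mono le_rfl inf_le_right h1
  have h3 : d x ∈ Submodule.map d (I ^ l • ⊤ : Submodule A P) := by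
    rw [Submodule.map_smul'', Submodule.map_top]
    exact h2
  obtain ⟨y, hy, hyx⟩ := h3
  refine Submodule.mem_sup.2 ⟨x - y, ?_, y, hy, sub_add_cancel x y⟩
  simp [LinearMap.mem_ker, map_sub, hyx]

theorem tor_aux_rho_surj (J : Ideal A) (P : Type) [AddCommGroup P] [Module A P]
    (x : TensorProduct A (A ⧸ J) P) :
    ∃ z : P, (Submodule.Quotient.mk (1 : A)) ⊗ₜ[A] z = x := by
  obtain ⟨z, hz⟩ := Submodule.mkQ_surjective (J • ⊤ : Submodule A P)
    (TensorProduct.quotTensorEquivQuotSMul P J x)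
  refine ⟨z, (TensorProduct.quotTensorEquivQuotSMul P J).injective ?_⟩
  rw [Ideal.Quotient.mk_eq_mk, TensorProduct.quotTensorEquivQuotSMul_mk_tmul, one_smul, ← hz]
  rfl

theorem tor_aux_rho_eq_zero (J : Ideal A) (P : Type) [AddCommGroup P] [Module A P]
    (z : P) (hz : z ∈ (J • ⊤ : Submodule A P)) :
    (Submodule.Quotient.mk (1 : A) : A ⧸ J) ⊗ₜ[A] z = 0 := by
  apply (TensorProduct.quotTensorEquivQuotSMul P J).injective
  rw [Ideal.Quotient.mk_eq_mk, TensorProduct.quotTensorEquivQuotSMul_mk_tmul, one_smul, map_zero,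
    Submodule.Quotient.mk_eq_zero]
  exact hz

end KeyLemma

theorem tor_aux_rho_mem {A : Type} [CommRing A] (J : Ideal A) (P : Type) [AddCommGroup P]
    [Module A P] (z : P) (hz : (Submodule.Quotient.mk (1 : A) : A ⧸ J) ⊗ₜ[A] z = 0) :
    z ∈ (J • ⊤ : Submodule A P) := by
  have := congrArg (TensorProduct.quotTensorEquivQuotSMul P J) hz
  rw [Ideal.Quotient.mk_eq_mk, TensorProduct.quotTensorEquivQuotSMul_mk_tmul, one_smul,
    map_zero] at this
  rwa [Submodule.Quotient.mk_eq_zero] at this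

open CategoryTheory

section Criterion

variable {R : Type} [CommRing R]

/-- If a morphism of short complexes of modules sends cycles into boundaries,
then the induced map on homology is zero. -/
theorem tor_aux_shortComplex_homologyMap_zero {S₁ S₂ : ShortComplex (ModuleCat.{0} R)}
    (ψ : S₁ ⟶ S₂) (h : ∀ x : S₁.X₂, S₁.g x = 0 → ∃ y : S₂.X₁, S₂.f y = ψ.τ₂ x) :
    ShortComplex.homologyMap ψ = 0 := by
  have comm23 : ∀ x : S₁.X₂, S₂.g (ψ.τ₂ x) = ψ.τ₃ (S₁.g x) := fun x =>
    congrFun (congrArg (fun (u : S₁.X₂ ⟶ S₂.X₃) => (u : S₁.X₂ → S₂.X₃)) ψ.comm₂₃) x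
  have comm12 : ∀ x : S₁.X₁, S₂.f (ψ.τ₁ x) = ψ.τ₂ (S₁.f x) := fun x => by
    have := congrFun (congrArg (fun (u : S₁.X₁ ⟶ S₂.X₂) => (u : S₁.X₁ → S₂.X₂)) ψ.comm₁₂) x
    simpa using this
  let φK : S₁.moduleCatLeftHomologyData.K ⟶ S₂.moduleCatLeftHomologyData.K :=
    ModuleCat.ofHom (LinearMap.codRestrict (LinearMap.ker S₂.g.hom)
      (ψ.τ₂.hom ∘ₗ (LinearMap.ker S₁.g.hom).subtype) (fun c => by
        have hc : S₁.g c.1 = 0 := c.2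
        show S₂.g (ψ.τ₂ c.1) = 0
        rw [comm23, hc, map_zero]))
  have h1 : φK ≫ S₂.moduleCatLeftHomologyData.i =
      S₁.moduleCatLeftHomologyData.i ≫ ψ.τ₂ := rfl
  have h2 : S₁.moduleCatLeftHomologyData.f' ≫ φK =
      ψ.τ₁ ≫ S₂.moduleCatLeftHomologyData.f' := by
    ext x
    exact Subtype.ext (comm12 x).symm
  have h3 : S₁.moduleCatLeftHomologyData.π ≫ (0 : _ ⟶ S₂.moduleCatLeftHomologyData.H) =
      φK ≫ S₂.moduleCatLeftHomologyData.π := by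
    ext (c : LinearMap.ker S₁.g.hom)
    change (0 : S₂.moduleCatLeftHomologyData.H) = S₂.moduleCatLeftHomologyData.π (φK c)
    obtain ⟨y, hy⟩ := h c.1 c.2
    rw [eq_comm]
    erw [Submodule.Quotient.mk_eq_zero]
    exact ⟨y, Subtype.ext hy⟩
  have heq := ShortComplex.LeftHomologyMapData.homologyMap_eq ψ
    (⟨φK, 0, h1, h2, h3⟩ : ShortComplex.LeftHomologyMapData ψ
      S₁.moduleCatLeftHomologyData S₂.moduleCatLeftHomologyData)
  rw [heq]
  simp

end Criterion

open CategoryTheory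


theorem tor_aux_complex_homologyMap_zero {R : Type} [CommRing R]
    {K L : HomologicalComplex (ModuleCat.{0} R) (ComplexShape.down ℕ)} (φ : K ⟶ L) (j : ℕ)
    (h : ∀ x : K.X (j + 1), K.d (j + 1) j x = 0 →
      ∃ y : L.X (j + 2), L.d (j + 2) (j + 1) y = φ.f (j + 1) x) :
    HomologicalComplex.homologyMap φ (j + 1) = 0 := by
  let e := HomologicalComplex.natIsoSc' (ModuleCat.{0} R) (ComplexShape.down ℕ)
    (j + 2) (j + 1) j (ChainComplex.prev ℕ (j + 1)) (ChainComplex.next_nat_succ j)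
  have hmap : (HomologicalComplex.shortComplexFunctor (ModuleCat.{0} R)
        (ComplexShape.down ℕ) (j + 1)).map φ =
      e.hom.app K ≫ (HomologicalComplex.shortComplexFunctor' (ModuleCat.{0} R)
        (ComplexShape.down ℕ) (j + 2) (j + 1) j).map φ ≫ e.inv.app L := by
    rw [← e.hom.naturality_assoc φ]
    simp
  have hz : ShortComplex.homologyMap ((HomologicalComplex.shortComplexFunctor' (ModuleCat.{0} R)
      (ComplexShape.down ℕ) (j + 2) (j + 1) j).map φ) = 0 := by
    apply tor_aux_shortComplex_homologyMap_zero
    exact h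
  show ShortComplex.homologyMap ((HomologicalComplex.shortComplexFunctor (ModuleCat.{0} R)
    (ComplexShape.down ℕ) (j + 1)).map φ) = 0
  rw [hmap, ShortComplex.homologyMap_comp, ShortComplex.homologyMap_comp, hz]
  simp

open CategoryTheory

noncomputable section Resolution

variable (A : Type) [CommRing A] [IsNoetherianRing A]

/-- choice of a finite free cover of a finitely generated module -/
def torAuxCover (N : Type) [AddCommGroup N] [Module A N] [Module.Finite A N] :
    Σ n : ℕ, { g : (Fin n → A) →ₗ[A] N // Function.Surjective g } := by
  have h := Module.Finite.exists_fin' A N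
  exact ⟨h.choose, h.choose_spec.choose, h.choose_spec.choose_spec⟩

variable (M : Type) [AddCommGroup M] [Module A M] [Module.Finite A M]

/-- the subtype of finitely generated modules -/
def torAuxTowerStep (N : { N : ModuleCat.{0} A // Module.Finite A N }) :
    { N : ModuleCat.{0} A // Module.Finite A N } :=
  haveI := N.2
  ⟨ModuleCat.of A (LinearMap.ker (torAuxCover A N.1).2.1),
    Module.Finite.iff_fg.mpr (IsNoetherian.noetherian _)⟩

/-- tower of syzygies -/
def torAuxTower : ℕ → { N : ModuleCat.{0} A // Module.Finite A N } :=
  fun k => Nat.rec ⟨ModuleCat.of A M, ‹Module.Finite A M›⟩ (fun _ ih => torAuxTowerStep A ih) k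

/-- number of generators at stage `k` -/
def torAuxN (k : ℕ) : ℕ :=
  haveI := (torAuxTower A M k).2
  (torAuxCover A (torAuxTower A M k).1).1

/-- the free module at stage `k` -/
abbrev torAuxP (k : ℕ) : Type := Fin (torAuxN A M k) → A

/-- the surjection at stage `k` -/
def torAuxPres (k : ℕ) : torAuxP A M k →ₗ[A] (torAuxTower A M k).1 :=
  haveI := (torAuxTower A M k).2
  (torAuxCover A (torAuxTower A M k).1).2.1

theorem torAuxPres_surj (k : ℕ) : Function.Surjective (torAuxPres A M k) :=
  haveI := (torAuxTower A M k).2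
  (torAuxCover A (torAuxTower A M k).1).2.2

/-- the differential `P (k+1) → P k` -/
def torAuxD (k : ℕ) : torAuxP A M (k + 1) →ₗ[A] torAuxP A M k :=
  (LinearMap.ker (torAuxPres A M k)).subtype ∘ₗ (torAuxPres A M (k + 1))

theorem torAuxD_range (k : ℕ) :
    LinearMap.range (torAuxD A M k) = LinearMap.ker (torAuxPres A M k) := by
  ext y
  constructor
  · rintro ⟨x, rfl⟩
    exact (torAuxPres A M (k + 1) x).2
  · intro hy
    obtain ⟨x, hx⟩ := torAuxPres_surj A M (k + 1) ⟨y, hy⟩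
    exact ⟨x, congrArg Subtype.val hx⟩

theorem torAuxD_ker (k : ℕ) :
    LinearMap.ker (torAuxD A M k) = LinearMap.ker (torAuxPres A M (k + 1)) := by
  ext x
  rw [LinearMap.mem_ker, LinearMap.mem_ker]
  exact ⟨fun h => Subtype.ext h, fun h => congrArg Subtype.val h⟩

theorem torAuxD_exact (k : ℕ) :
    LinearMap.range (torAuxD A M (k + 1)) = LinearMap.ker (torAuxD A M k) := by
  rw [torAuxD_range, torAuxD_ker]

theorem torAuxD_comp (k : ℕ) : (torAuxD A M k) ∘ₗ (torAuxD A M (k + 1)) = 0 := by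
  apply LinearMap.ext
  intro x
  have : torAuxD A M (k + 1) x ∈ LinearMap.ker (torAuxD A M k) := by
    rw [← torAuxD_exact]
    exact ⟨x, rfl⟩
  simpa using this

/-- the complex -/
def torAuxComplex : ChainComplex (ModuleCat.{0} A) ℕ :=
  ChainComplex.of (fun k => ModuleCat.of A (torAuxP A M k))
    (fun k => ModuleCat.ofHom (torAuxD A M k))
    (fun k => by
      exact ModuleCat.hom_ext (torAuxD_comp A M k))

theorem torAuxComplex_d (k : ℕ) :
    (torAuxComplex A M).d (k + 1) k = ModuleCat.ofHom (torAuxD A M k) :=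
  by unfold torAuxComplex; exact ChainComplex.of_d (fun k => ModuleCat.of A (torAuxP A M k)) (fun k => ModuleCat.ofHom (torAuxD A M k)) k

instance torAuxComplex_projective (k : ℕ) : Projective ((torAuxComplex A M).X k) :=
  ModuleCat.projective_of_free (Pi.basisFun A (Fin (torAuxN A M k)))

/-- the augmentation map, viewed as a map to `M`; note `(torAuxTower A M 0).1`
is definitionally `ModuleCat.of A M`. -/
def torAuxPres₀ : torAuxP A M 0 →ₗ[A] M := torAuxPres A M 0

theorem torAuxPres₀_surj : Function.Surjective (torAuxPres₀ A M) := torAuxPres_surj A M 0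

theorem torAuxPres₀_ker : LinearMap.ker (torAuxPres₀ A M) = LinearMap.range (torAuxD A M 0) := by
  rw [torAuxD_range]; rfl

end Resolution

noncomputable section Res2

variable (A : Type) [CommRing A] [IsNoetherianRing A]
variable (M : Type) [AddCommGroup M] [Module A M] [Module.Finite A M]

theorem torAuxπw : (torAuxComplex A M).d 1 0 ≫ ModuleCat.ofHom (torAuxPres₀ A M) = 0 := by
  rw [torAuxComplex_d]
  ext x
  have : torAuxD A M 0 x ∈ LinearMap.ker (torAuxPres₀ A M) := by
    rw [torAuxPres₀_ker]
    exact ⟨x, rfl⟩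
  exact this

/-- the augmentation chain map -/
def torAuxπ : torAuxComplex A M ⟶ (ChainComplex.single₀ (ModuleCat.{0} A)).obj (ModuleCat.of A M) :=
  (ChainComplex.toSingle₀Equiv _ _).symm ⟨ModuleCat.ofHom (torAuxPres₀ A M), torAuxπw A M⟩

theorem torAuxπ_f_zero : (torAuxπ A M).f 0 = ModuleCat.ofHom (torAuxPres₀ A M) := by
  exact ChainComplex.toSingle₀Equiv_symm_apply_f_zero _ _

theorem torAuxComplex_exactAt_succ (n : ℕ) : (torAuxComplex A M).ExactAt (n + 1) := by
  rw [HomologicalComplex.exactAt_iff' _ (n + 1 + 1) (n + 1) n (by simp) (by simp)]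
  rw [ShortComplex.moduleCat_exact_iff]
  intro (x : (torAuxComplex A M).X (n+1)) hx
  have hx' : torAuxD A M n x = 0 := by
    have := DFunLike.congr_fun (congrArg ModuleCat.Hom.hom (torAuxComplex_d A M n)) x
    exact this.symm.trans hx
  have : x ∈ LinearMap.range (torAuxD A M (n + 1)) := by
    rw [torAuxD_exact]; exact hx'
  obtain ⟨y, hy⟩ := this
  refine ⟨y, ?_⟩
  have := DFunLike.congr_fun (congrArg ModuleCat.Hom.hom (torAuxComplex_d A M (n + 1))) y
  exact this.trans hy

/-- The finite free resolution of `M`, as a `ProjectiveResolution`. -/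
def torAuxResolution : ProjectiveResolution (ModuleCat.of A M) where
  complex := torAuxComplex A M
  π := torAuxπ A M
  quasiIso := ⟨fun n => by
    cases n with
    | zero =>
      rw [ChainComplex.quasiIsoAt₀_iff, ShortComplex.quasiIso_iff_of_zeros']
      · constructor
        · rw [ShortComplex.moduleCat_exact_iff]
          intro (x : (torAuxComplex A M).X 0) hx
          have hx' : torAuxPres₀ A M x = 0 := by
            have := DFunLike.congr_fun (congrArg ModuleCat.Hom.hom (torAuxπ_f_zero A M)) x
            exact this.symm.trans hx
          have : x ∈ LinearMap.range (torAuxD A M 0) := by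
            rw [← torAuxPres₀_ker]; exact hx'
          obtain ⟨y, hy⟩ := this
          exact ⟨y, (DFunLike.congr_fun (congrArg ModuleCat.Hom.hom (torAuxComplex_d A M 0)) y).trans hy⟩
        · rw [ModuleCat.epi_iff_surjective]
          intro z
          obtain ⟨x, hx⟩ := torAuxPres₀_surj A M z
          refine ⟨x, ?_⟩
          have := DFunLike.congr_fun (congrArg ModuleCat.Hom.hom (torAuxπ_f_zero A M)) x
          exact this.trans hx
      all_goals rfl
    | succ n =>
      rw [quasiIsoAt_iff_exactAt']
      · apply torAuxComplex_exactAt_succ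
      · apply ChainComplex.exactAt_succ_single_obj⟩

end Res2

/-- For a commutative noetherian ring `A`, an ideal `I`, a finitely generated
`A`-module `M` and `i ≥ 1`, the pro-system `{Tor_i^A(A/I^λ, M)}_λ` is pro-zero:
for every `λ` there is `μ ≥ λ` such that the transition map
`Tor_i^A(A/I^μ, M) → Tor_i^A(A/I^λ, M)` is zero. -/
theorem tor_pro_zero {A : Type} [CommRing A] [IsNoetherianRing A] (I : Ideal A)
    (M : Type) [AddCommGroup M] [Module A M] [Module.Finite A M]
    (i : ℕ) (hi : 1 ≤ i) (l : ℕ) :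
    ∃ m : ℕ, ∃ hm : l ≤ m,
      ((Tor (ModuleCat.{0} A) i).map
          (ModuleCat.ofHom
            (Submodule.mapQ (I ^ m) (I ^ l) LinearMap.id
              (fun x hx => Ideal.pow_le_pow_right hm hx)))).app
        (ModuleCat.of A M) = 0 := by
  obtain ⟨j, rfl⟩ : ∃ j, i = j + 1 := ⟨i - 1, by omega⟩
  obtain ⟨m, hm, hkey⟩ := tor_aux_key I (torAuxD A M j) l
  refine ⟨m, hm, ?_⟩
  set f : ModuleCat.of A (A ⧸ (I ^ m : Ideal A)) ⟶ ModuleCat.of A (A ⧸ (I ^ l : Ideal A)) :=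
    ModuleCat.ofHom (Submodule.mapQ (I ^ m) (I ^ l) LinearMap.id
      (fun x hx => Ideal.pow_le_pow_right hm hx)) with hf
  show (NatTrans.leftDerived ((tensoringLeft (ModuleCat.{0} A)).map f) (j + 1)).app
    (ModuleCat.of A M) = 0
  rw [ProjectiveResolution.leftDerived_app_eq ((tensoringLeft (ModuleCat.{0} A)).map f)
    (torAuxResolution A M) (j + 1)]
  have h0 : (HomologicalComplex.homologyFunctor (ModuleCat.{0} A) (ComplexShape.down ℕ)
      (j + 1)).map ((NatTrans.mapHomologicalComplex ((tensoringLeft (ModuleCat.{0} A)).map f)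
        (ComplexShape.down ℕ)).app (torAuxResolution A M).complex) = 0 := by
    apply tor_aux_complex_homologyMap_zero
    intro x hx
    obtain ⟨z, hz⟩ := tor_aux_rho_surj (I ^ m) (torAuxP A M (j + 1)) x
    have hdz : torAuxD A M j z ∈ (I ^ m • ⊤ : Submodule A (torAuxP A M j)) := by
      apply tor_aux_rho_mem (I ^ m)
      calc (Submodule.Quotient.mk (1 : A) : A ⧸ (I ^ m : Ideal A)) ⊗ₜ[A] (torAuxD A M j z)
          = show TensorProduct A (A ⧸ (I ^ m : Ideal A)) (torAuxP A M j) from (ModuleCat.of A (A ⧸ (I ^ m : Ideal A)) ◁ ModuleCat.ofHom (torAuxD A M j))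
            ((Submodule.Quotient.mk (1 : A) : A ⧸ (I ^ m : Ideal A)) ⊗ₜ[A] z) := rfl
        _ = show TensorProduct A (A ⧸ (I ^ m : Ideal A)) (torAuxP A M j) from (ModuleCat.of A (A ⧸ (I ^ m : Ideal A)) ◁ (torAuxComplex A M).d (j + 1) j)
            ((Submodule.Quotient.mk (1 : A) : A ⧸ (I ^ m : Ideal A)) ⊗ₜ[A] z) := by
            rw [torAuxComplex_d]
            rfl
        _ = 0 := by subst hz; exact hx
    have hzmem := hkey z hdz
    rw [← torAuxD_exact A M j] at hzmem
    obtain ⟨b, hb, y, hy, hby⟩ := Submodule.mem_sup.1 hzmem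
    obtain ⟨w, rfl⟩ := hb
    have final : (Submodule.Quotient.mk (1 : A) : A ⧸ (I ^ l : Ideal A)) ⊗ₜ[A]
        (torAuxD A M (j + 1) w) =
        (Submodule.Quotient.mk (1 : A) : A ⧸ (I ^ l : Ideal A)) ⊗ₜ[A] z := by
      rw [← hby, TensorProduct.tmul_add, tor_aux_rho_eq_zero (I ^ l) _ y hy, add_zero]
    refine ⟨(Submodule.Quotient.mk (1 : A) : A ⧸ (I ^ l : Ideal A)) ⊗ₜ[A] w, ?_⟩
    calc _ = show TensorProduct A (A ⧸ (I ^ l : Ideal A)) (torAuxP A M (j + 1)) from (ModuleCat.of A (A ⧸ (I ^ l : Ideal A)) ◁ (torAuxComplex A M).d (j + 2) (j + 1))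
            ((Submodule.Quotient.mk (1 : A) : A ⧸ (I ^ l : Ideal A)) ⊗ₜ[A] w) := rfl
      _ = show TensorProduct A (A ⧸ (I ^ l : Ideal A)) (torAuxP A M (j + 1)) from (ModuleCat.of A (A ⧸ (I ^ l : Ideal A)) ◁ ModuleCat.ofHom (torAuxD A M (j + 1)))
            ((Submodule.Quotient.mk (1 : A) : A ⧸ (I ^ l : Ideal A)) ⊗ₜ[A] w) := by
            rw [torAuxComplex_d]
            rfl
      _ = (Submodule.Quotient.mk (1 : A) : A ⧸ (I ^ l : Ideal A)) ⊗ₜ[A] z := final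
      _ = show TensorProduct A (A ⧸ (I ^ l : Ideal A)) (torAuxP A M (j + 1)) from (f ▷ ModuleCat.of A (torAuxP A M (j + 1)))
            ((Submodule.Quotient.mk (1 : A) : A ⧸ (I ^ m : Ideal A)) ⊗ₜ[A] z) := rfl
      _ = _ := by subst hz; rfl
  rw [h0]
  simp
end

section
/- Let k be a commutative ring and α ∈ k. In the commutative polynomial quotient ring R = k[x,y]/(xy − α), the elements 1, x^i (i ≥ 1), y^j (j ≥ 1) form a basis of R as a k-module. -/
open MvPolynomial

noncomputable section CQB

variable {k : Type} [CommRing k] (α : k)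

def cqbW (d : Fin 2 →₀ ℕ) : ℤ →₀ k :=
  Finsupp.single ((d 0 : ℤ) - d 1) (α ^ min (d 0) (d 1))

def cqbS : MvPolynomial (Fin 2) k →ₗ[k] (ℤ →₀ k) :=
  (MvPolynomial.basisMonomials (Fin 2) k).constr k (cqbW α)

lemma cqbS_monomial (d : Fin 2 →₀ ℕ) (c : k) :
    cqbS α (monomial d c) = c • cqbW α d := by
  have h1 : (monomial d c : MvPolynomial (Fin 2) k) = c • monomial d 1 := by
    simp [MvPolynomial.smul_monomial]
  have hb : (MvPolynomial.basisMonomials (Fin 2) k) d = monomial d 1 :=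
    congrFun (MvPolynomial.coe_basisMonomials (Fin 2) k) d
  rw [h1, map_smul]
  congr 1
  rw [cqbS, ← hb, Module.Basis.constr_basis]


lemma cqbS_mul_gen (p : MvPolynomial (Fin 2) k) :
    cqbS α (p * (X 0 * X 1 - C α)) = 0 := by
  induction p using MvPolynomial.induction_on' with
  | monomial d c =>
      have hX : (X 0 * X 1 : MvPolynomial (Fin 2) k)
          = monomial (Finsupp.single 0 1 + Finsupp.single 1 1) 1 := by
        calc (X 0 * X 1 : MvPolynomial (Fin 2) k) = X 0 ^ 1 * X 1 ^ 1 := by ring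
        _ = _ := by rw [X_pow_eq_monomial, X_pow_eq_monomial, monomial_mul, one_mul]
      rw [mul_sub, hX, monomial_mul, mul_one,
        show (C α : MvPolynomial (Fin 2) k) = monomial 0 α from rfl,
        monomial_mul, add_zero, map_sub, cqbS_monomial, cqbS_monomial]
      have h0 : ((d + (Finsupp.single 0 1 + Finsupp.single 1 1) : Fin 2 →₀ ℕ)) 0 = d 0 + 1 := by
        simp
      have h1' : ((d + (Finsupp.single 0 1 + Finsupp.single 1 1) : Fin 2 →₀ ℕ)) 1 = d 1 + 1 := by
        simp
      unfold cqbW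
      rw [h0, h1']
      rw [Finsupp.smul_single', Finsupp.smul_single']
      rw [sub_eq_zero]
      congr 1
      · push_cast; ring
      · rw [Nat.succ_min_succ, Nat.succ_eq_add_one, pow_succ]
        ring
  | add p q hp hq =>
      rw [add_mul, map_add, hp, hq, add_zero]

lemma cqbS_mem (p : MvPolynomial (Fin 2) k)
    (hp : p ∈ Ideal.span {(X 0 * X 1 - C α : MvPolynomial (Fin 2) k)}) :
    cqbS α p = 0 := by
  obtain ⟨q, rfl⟩ := Ideal.mem_span_singleton.mp hp
  rw [mul_comm]
  exact cqbS_mul_gen α q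

lemma cqbS_X0_pow (a : ℕ) : cqbS α ((X 0 : MvPolynomial (Fin 2) k) ^ a)
    = Finsupp.single (a : ℤ) 1 := by
  rw [X_pow_eq_monomial, cqbS_monomial, cqbW]
  simp

lemma cqbS_X1_pow (a : ℕ) : cqbS α ((X 1 : MvPolynomial (Fin 2) k) ^ a)
    = Finsupp.single (-(a : ℤ)) 1 := by
  rw [X_pow_eq_monomial, cqbS_monomial, cqbW]
  simp

def cqbQ (n : ℤ) : MvPolynomial (Fin 2) k :=
  if 0 ≤ n then X 0 ^ n.toNat else X 1 ^ (-n).toNat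

lemma cqbS_q (n : ℤ) : cqbS α (cqbQ (k := k) n) = Finsupp.single n 1 := by
  unfold cqbQ
  split_ifs with h
  · rw [cqbS_X0_pow]; congr 1; exact Int.toNat_of_nonneg h
  · rw [cqbS_X1_pow]; congr 1; omega

def cqbV (n : ℤ) :
    MvPolynomial (Fin 2) k ⧸ Ideal.span {(X 0 * X 1 - C α : MvPolynomial (Fin 2) k)} :=
  if 0 ≤ n then (Ideal.Quotient.mk _ (X 0 : MvPolynomial (Fin 2) k)) ^ n.toNat
  else (Ideal.Quotient.mk _ (X 1 : MvPolynomial (Fin 2) k)) ^ (-n).toNat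

lemma cqb_mk_q (n : ℤ) :
    Ideal.Quotient.mk (Ideal.span {(X 0 * X 1 - C α : MvPolynomial (Fin 2) k)}) (cqbQ n)
      = cqbV α n := by
  unfold cqbQ cqbV
  split_ifs <;> rw [map_pow]

lemma cqb_li : LinearIndependent k (cqbV α) := by
  rw [linearIndependent_iff]
  intro f hf
  set I : Ideal (MvPolynomial (Fin 2) k) := Ideal.span {(X 0 * X 1 - C α)} with hI
  set P : MvPolynomial (Fin 2) k := f.sum (fun n c => c • cqbQ (k := k) n) with hP
  have hmk : Ideal.Quotient.mk I P = Finsupp.linearCombination k (cqbV α) f := by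
    rw [← Ideal.Quotient.mkₐ_eq_mk (R₁ := k), hP, map_finsuppSum,
      Finsupp.linearCombination_apply]
    refine Finsupp.sum_congr fun n _ => ?_
    rw [map_smul, Ideal.Quotient.mkₐ_eq_mk (R₁ := k), cqb_mk_q]
  have hPI : P ∈ I := by
    rw [← Ideal.Quotient.eq_zero_iff_mem, hmk, hf]
  have h0 := cqbS_mem α P hPI
  rw [hP, map_finsuppSum] at h0
  rw [Finsupp.sum_congr (g2 := fun n c => Finsupp.single n c) fun n _ => by
    rw [map_smul, cqbS_q, Finsupp.smul_single', mul_one], Finsupp.sum_single f] at h0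
  exact h0

lemma cqb_pow_mul_pow {R : Type} [CommRing R] [Algebra k R] (x y : R)
    (h : x * y = algebraMap k R α) {a b : ℕ} (hba : b ≤ a) :
    x ^ a * y ^ b = α ^ b • x ^ (a - b) := by
  calc x ^ a * y ^ b = x ^ (a - b) * (x * y) ^ b := by
        rw [mul_pow, ← mul_assoc, ← pow_add, Nat.sub_add_cancel hba]
  _ = x ^ (a - b) * algebraMap k R (α ^ b) := by rw [h, map_pow]
  _ = α ^ b • x ^ (a - b) := by rw [Algebra.smul_def, mul_comm]

lemma cqb_key (a b : ℕ) :
    Ideal.Quotient.mk (Ideal.span {(X 0 * X 1 - C α : MvPolynomial (Fin 2) k)})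
        (X 0 ^ a * X 1 ^ b)
      = α ^ min a b • cqbV α ((a : ℤ) - b) := by
  set I : Ideal (MvPolynomial (Fin 2) k) := Ideal.span {(X 0 * X 1 - C α)} with hI
  have hgen : (X 0 * X 1 - C α : MvPolynomial (Fin 2) k) ∈ I :=
    Ideal.subset_span rfl
  have hxy : Ideal.Quotient.mk I (X 0) * Ideal.Quotient.mk I (X 1)
      = algebraMap k _ α := by
    have h0 : Ideal.Quotient.mk I (X 0 * X 1 - C α) = 0 :=
      Ideal.Quotient.eq_zero_iff_mem.mpr hgen
    rw [map_sub, map_mul, sub_eq_zero] at h0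
    rw [h0, ← MvPolynomial.algebraMap_eq, ← Ideal.Quotient.mkₐ_eq_mk (R₁ := k)]
    exact (Ideal.Quotient.mkₐ k I).commutes α
  rw [map_mul, map_pow, map_pow]
  rcases le_or_gt b a with hba | hab
  · rw [cqb_pow_mul_pow α _ _ hxy hba, min_eq_right hba]
    congr 1
    unfold cqbV
    rw [if_pos (by omega : (0:ℤ) ≤ (a:ℤ) - b)]
    congr 1
    omega
  · rw [mul_comm ((Ideal.Quotient.mk I) (X 0) ^ a),
      cqb_pow_mul_pow α _ _ (by rw [mul_comm]; exact hxy) hab.le,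
      min_eq_left hab.le]
    congr 1
    unfold cqbV
    rw [if_neg (by omega : ¬ (0:ℤ) ≤ (a:ℤ) - b)]
    congr 1
    omega

lemma cqb_span : ⊤ ≤ Submodule.span k (Set.range (cqbV α)) := by
  rintro z -
  obtain ⟨p, rfl⟩ := Ideal.Quotient.mk_surjective z
  induction p using MvPolynomial.induction_on' with
  | monomial d c =>
      have hsum : d = Finsupp.single 0 (d 0) + Finsupp.single 1 (d 1) := by
        ext i
        fin_cases i <;> simp
      have hd : (monomial d c : MvPolynomial (Fin 2) k)
          = c • (X 0 ^ (d 0) * X 1 ^ (d 1)) := by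
        rw [X_pow_eq_monomial, X_pow_eq_monomial, monomial_mul, one_mul,
          MvPolynomial.smul_monomial, smul_eq_mul, mul_one, ← hsum]
      rw [hd, ← Ideal.Quotient.mkₐ_eq_mk (R₁ := k), map_smul,
        Ideal.Quotient.mkₐ_eq_mk (R₁ := k), cqb_key]
      exact Submodule.smul_mem _ _ (Submodule.smul_mem _ _
        (Submodule.subset_span ⟨_, rfl⟩))
  | add p q hp hq =>
      rw [map_add]
      exact Submodule.add_mem _ hp hq

end CQB

/-- In `R = k[x,y]/(xy − α)`, the elements `1`, `x^i (i ≥ 1)`, `y^j (j ≥ 1)`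
form a `k`-module basis (indexed here by `ℤ`, with `n ≥ 0 ↦ x^n` and
`n < 0 ↦ y^{−n}`). -/
theorem commutative_quotient_basis {k : Type} [CommRing k] (α : k) :
    ∃ B : Module.Basis ℤ k
      ((MvPolynomial (Fin 2) k) ⧸
        (Ideal.span {(X 0 * X 1 - C α : MvPolynomial (Fin 2) k)})),
      ∀ n : ℤ,
        B n = if 0 ≤ n
          then (Ideal.Quotient.mk _ (X 0 : MvPolynomial (Fin 2) k)) ^ n.toNat
          else (Ideal.Quotient.mk _ (X 1 : MvPolynomial (Fin 2) k)) ^ (-n).toNat := by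
  refine ⟨Module.Basis.mk (cqb_li α) (cqb_span α), fun n => ?_⟩
  rw [Module.Basis.mk_apply]
  rfl
end

section
/- Let k be a commutative ring and α ∈ k, and let R = k[x,y]/(xy − α). Then the square of ring homomorphisms with corners k, k[x], k[y], R (the maps being the canonical inclusions and projections) is a pullback square of rings: the canonical map k → k[x] ×_R k[y] is an isomorphism, where the fibre product consists of pairs (f, g) ∈ k[x] × k[y] having equal image in R. -/
open MvPolynomial
open LaurentPolynomial (T invert)

lemma toLaurent_apply_int {k : Type} [CommRing k] (f : Polynomial k) (n : ℤ) :
    (Polynomial.toLaurent f).coeff n = if 0 ≤ n then f.coeff n.toNat else 0 := by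
  induction f using Polynomial.induction_on' with
  | add p q hp hq =>
      rw [map_add, AddMonoidAlgebra.coeff_add, Finsupp.add_apply, hp, hq]
      split <;> simp
  | monomial m r =>
      rw [Polynomial.toLaurent_C_mul_T, ← LaurentPolynomial.single_eq_C_mul_T, AddMonoidAlgebra.coeff_single, Finsupp.single_apply,
        Polynomial.coeff_monomial]
      split_ifs with h1 h2 h3 <;> first | rfl | omega

lemma laurent_key {k : Type} [CommRing k] (α : k) (f g : Polynomial k)
    (E : Polynomial.aeval (T 1 : LaurentPolynomial k) f
       = Polynomial.aeval (LaurentPolynomial.C α * T (-1)) g) :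
    f = Polynomial.C (f.coeff 0) ∧ f.coeff 0 = g.coeff 0 := by
  have h1 : Polynomial.aeval (T 1 : LaurentPolynomial k) f = Polynomial.toLaurent f := by
    have e : (T 1 : LaurentPolynomial k) = Polynomial.toLaurentAlg (Polynomial.X) := by
      simp [Polynomial.toLaurentAlg_apply, Polynomial.toLaurent_X]
    rw [e, Polynomial.aeval_algHom_apply, Polynomial.aeval_X_left_apply,
      Polynomial.toLaurentAlg_apply]
  set G : Polynomial k := Polynomial.aeval (Polynomial.C α * Polynomial.X) g with hGdef
  have h2 : Polynomial.aeval (LaurentPolynomial.C α * T (-1) : LaurentPolynomial k) g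
      = invert (Polynomial.toLaurent G) := by
    have e : (LaurentPolynomial.C α * T (-1) : LaurentPolynomial k)
        = (invert (R := k)).toAlgHom (Polynomial.toLaurentAlg (Polynomial.C α * Polynomial.X)) := by
      simp [Polynomial.toLaurentAlg_apply, map_mul, Polynomial.toLaurent_C,
        Polynomial.toLaurent_X]
    rw [e, Polynomial.aeval_algHom_apply, Polynomial.aeval_algHom_apply,
      Polynomial.toLaurentAlg_apply]
    rfl
  rw [h1, h2] at E
  have hc : ∀ n : ℤ, (Polynomial.toLaurent f).coeff n = (Polynomial.toLaurent G).coeff (-n) := by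
    intro n
    rw [E]; exact LaurentPolynomial.invert_apply _ _
  have hcoeff : ∀ N : ℕ, 0 < N → f.coeff N = 0 := by
    intro N hN
    have := hc N
    rw [toLaurent_apply_int, toLaurent_apply_int] at this
    rw [if_pos (by positivity), if_neg (by omega)] at this
    simpa using this
  have hfC : f = Polynomial.C (f.coeff 0) :=
    Polynomial.eq_C_of_natDegree_le_zero
      (Polynomial.natDegree_le_iff_coeff_eq_zero.mpr fun N hN => hcoeff N hN)
  refine ⟨hfC, ?_⟩
  have h0 := hc 0
  rw [toLaurent_apply_int, toLaurent_apply_int] at h0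
  simp only [neg_zero, le_refl, if_pos, Int.toNat_zero] at h0
  rw [h0]
  have hG : G = g.comp (Polynomial.C α * Polynomial.X) := rfl
  rw [hG, Polynomial.coeff_zero_eq_eval_zero, Polynomial.eval_comp,
    Polynomial.coeff_zero_eq_eval_zero]
  simp

/-- The square with corners `k`, `k[x]`, `k[y]`, `R = k[x,y]/(xy − α)` (with
the canonical inclusions and projections) is a pullback of rings: a pair of
polynomials `f ∈ k[x]`, `g ∈ k[y]` with equal images in `R` comes from a
unique constant `c ∈ k`. -/
theorem polynomial_pullback_square {k : Type} [CommRing k] (α : k) :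
    ∀ f g : Polynomial k,
      Polynomial.aeval
          (Ideal.Quotient.mk (Ideal.span {(X 0 * X 1 - C α : MvPolynomial (Fin 2) k)})
            (X 0 : MvPolynomial (Fin 2) k)) f
        = Polynomial.aeval
            (Ideal.Quotient.mk (Ideal.span {(X 0 * X 1 - C α : MvPolynomial (Fin 2) k)})
              (X 1 : MvPolynomial (Fin 2) k)) g →
      ∃! c : k, Polynomial.C c = f ∧ Polynomial.C c = g := by
  intro f g h
  set I : Ideal (MvPolynomial (Fin 2) k) :=
    Ideal.span {(X 0 * X 1 - C α : MvPolynomial (Fin 2) k)} with hI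
  have h' : Ideal.Quotient.mk I (Polynomial.aeval (X 0 : MvPolynomial (Fin 2) k) f)
      = Ideal.Quotient.mk I (Polynomial.aeval (X 1 : MvPolynomial (Fin 2) k) g) := by
    have e0 : (Ideal.Quotient.mk I) ((X 0 : MvPolynomial (Fin 2) k))
        = (Ideal.Quotient.mkₐ k I) (X 0) := rfl
    have e1 : (Ideal.Quotient.mk I) ((X 1 : MvPolynomial (Fin 2) k))
        = (Ideal.Quotient.mkₐ k I) (X 1) := rfl
    rw [e0, e1, Polynomial.aeval_algHom_apply, Polynomial.aeval_algHom_apply] at h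
    exact h
  have hmem : Polynomial.aeval (X 0 : MvPolynomial (Fin 2) k) f
      - Polynomial.aeval (X 1 : MvPolynomial (Fin 2) k) g ∈ I := Ideal.Quotient.eq.mp h'
  obtain ⟨c, hc⟩ := (Ideal.mem_span_singleton).mp hmem
  -- two algebra maps to Laurent polynomials
  have main : ∀ (u v : LaurentPolynomial k), u * v = LaurentPolynomial.C α →
      Polynomial.aeval u f = Polynomial.aeval v g := by
    intro u v huv
    have := congrArg (MvPolynomial.aeval (R := k) ![u, v]) hc
    rw [map_sub, map_mul, map_sub, map_mul] at this
    simp only [MvPolynomial.aeval_X, Matrix.cons_val_zero, Matrix.cons_val_one, Matrix.head_cons,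
      MvPolynomial.aeval_C] at this
    rw [huv, ← LaurentPolynomial.C_eq_algebraMap, sub_self, zero_mul] at this
    rw [← Polynomial.aeval_algHom_apply, ← Polynomial.aeval_algHom_apply] at this
    simp only [MvPolynomial.aeval_X, Matrix.cons_val_zero, Matrix.cons_val_one,
      Matrix.head_cons] at this
    exact sub_eq_zero.mp this
  have huv1 : (T 1 : LaurentPolynomial k) * (LaurentPolynomial.C α * T (-1))
      = LaurentPolynomial.C α := by
    rw [mul_comm, LaurentPolynomial.mul_T_assoc]; norm_num
  have E1 := main (T 1) (LaurentPolynomial.C α * T (-1)) huv1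
  have E2 := main (LaurentPolynomial.C α * T (-1)) (T 1) (by rw [mul_comm]; exact huv1)
  obtain ⟨hf, hfg⟩ := laurent_key α f g E1
  obtain ⟨hg, hgf⟩ := laurent_key α g f E2.symm
  refine ⟨f.coeff 0, ⟨hf.symm, ?_⟩, ?_⟩
  · rw [hfg]; exact hg.symm
  · rintro c' ⟨hc1, hc2⟩
    rw [← hc1]; simp
end
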